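/- Let t, χ, q, γ, g > 0. For each integer k ≥ 1 set δ = t/k, V_P(k) = (q/(2χ)) (1 − e^{−2χδ}) and V_Q(k) = γ/δ, and let V_k^{(k)} denote the k-th term of the sequence defined by V₁ = V_P(k) + V_Q(k)/g² and V_{j+1} = V_P(k) + V_Q(k) V_j/(V_Q(k) + g² V_j). Then lim_{k→∞} V_k^{(k)} = (√(γ q)/g) · coth(t g √(q/γ)). -/

import Mathlib

open Filter

/-- The sequence defined by `V₁ = V_P + V_Q/g²` and
`V_{j+1} = V_P + V_Q V_j/(V_Q + g² V_j)` for `j ≥ 1` (the value at index `0` is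
irrelevant). -/
noncomputable def varianceSeq (VP VQ g : ℝ) : ℕ → ℝ
  | 0 => 0
  | 1 => VP + VQ / g ^ 2
  | (j + 2) => VP + VQ * varianceSeq VP VQ g (j + 1) / (VQ + g ^ 2 * varianceSeq VP VQ g (j + 1))

/-- Closed form for the variance recurrence when the transition variance is
parametrised as `V_P = 2 V_Q (cosh μ − 1)/g²`. -/
lemma varianceSeq_closed_form (VQ g μ : ℝ) (hVQ : 0 < VQ) (hg : 0 < g) (hμ : 0 < μ) :
    ∀ k : ℕ, 1 ≤ k →
      varianceSeq (2 * VQ * (Real.cosh μ - 1) / g ^ 2) VQ g k =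
        VQ / g ^ 2 *
          (((Real.cosh μ - 1) * Real.sinh (k * μ) + Real.sinh μ * Real.cosh (k * μ)) /
            Real.sinh (k * μ)) := by
  intro k hk
  induction k, hk using Nat.le_induction with
  | base =>
      have hs : Real.sinh μ ≠ 0 := by
        simpa using (Real.sinh_pos_iff.mpr hμ).ne'
      simp only [Nat.cast_one, one_mul, varianceSeq]
      field_simp
      ring
  | succ k hk ih =>
      obtain ⟨j, rfl⟩ : ∃ j, k = j + 1 := ⟨k - 1, by omega⟩
      have hS : (0:ℝ) < Real.sinh ((j+1 : ℕ) * μ) :=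
        Real.sinh_pos_iff.mpr (by positivity)
      have hS' : (0:ℝ) < Real.sinh (((j+1 : ℕ) + 1 : ℕ) * μ) :=
        Real.sinh_pos_iff.mpr (by positivity)
      have hcast : (((j+1 : ℕ) + 1 : ℕ) : ℝ) * μ = (j+1 : ℕ) * μ + μ := by push_cast; ring
      have hstep : varianceSeq (2 * VQ * (Real.cosh μ - 1) / g ^ 2) VQ g (j + 1 + 1) =
          2 * VQ * (Real.cosh μ - 1) / g ^ 2 +
            VQ * varianceSeq (2 * VQ * (Real.cosh μ - 1) / g ^ 2) VQ g (j + 1) /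
              (VQ + g ^ 2 * varianceSeq (2 * VQ * (Real.cosh μ - 1) / g ^ 2) VQ g (j + 1)) := rfl
      rw [hstep, ih, hcast, Real.sinh_add, Real.cosh_add]
      set S := Real.sinh ((j+1 : ℕ) * μ) with hSdef
      set C := Real.cosh ((j+1 : ℕ) * μ) with hCdef
      set s := Real.sinh μ
      set c := Real.cosh μ
      have hden : VQ + g ^ 2 * (VQ / g ^ 2 * (((c - 1) * S + s * C) / S)) =
          VQ * (S * c + C * s) / S := by
        field_simp
        ring
      rw [hden]
      have hS'ne : S * c + C * s ≠ 0 := by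
        have : Real.sinh ((j+1 : ℕ) * μ + μ) = S * c + C * s := Real.sinh_add _ _
        rw [← this]; exact (Real.sinh_pos_iff.mpr (by positivity)).ne'
      have hc2 : c ^ 2 - s ^ 2 = 1 := Real.cosh_sq_sub_sinh_sq μ
      have hne2 : c * S + s * C ≠ 0 := by rw [mul_comm c, mul_comm s]; exact hS'ne
      field_simp
      linear_combination S * hc2

/-- Closed form for the variance recurrence in terms of the original data. -/
lemma varianceSeq_closed_form' (VP VQ g : ℝ) (hVP : 0 < VP) (hVQ : 0 < VQ) (hg : 0 < g)
    (k : ℕ) (hk : 1 ≤ k) :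
    varianceSeq VP VQ g k =
      VP / 2 + Real.sqrt (VP * VQ + g ^ 2 * VP ^ 2 / 4) / g *
        (Real.cosh (k * Real.arsinh (g * Real.sqrt (VP * VQ + g ^ 2 * VP ^ 2 / 4) / VQ)) /
         Real.sinh (k * Real.arsinh (g * Real.sqrt (VP * VQ + g ^ 2 * VP ^ 2 / 4) / VQ))) := by
  have hz : (0:ℝ) < VP * VQ + g ^ 2 * VP ^ 2 / 4 := by positivity
  set z := VP * VQ + g ^ 2 * VP ^ 2 / 4 with hzdef
  set x := g * Real.sqrt z / VQ with hxdef
  have hx : 0 < x := by positivity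
  have hμpos : 0 < Real.arsinh x := by
    have h1 : 0 < Real.sinh (Real.arsinh x) := by rw [Real.sinh_arsinh]; exact hx
    exact Real.sinh_pos_iff.mp h1
  have hcosh : Real.cosh (Real.arsinh x) = 1 + g ^ 2 * VP / (2 * VQ) := by
    rw [Real.cosh_arsinh]
    have h2 : 1 + x ^ 2 = (1 + g ^ 2 * VP / (2 * VQ)) ^ 2 := by
      have hx2 : x ^ 2 = g ^ 2 * z / VQ ^ 2 := by
        rw [hxdef, div_pow, mul_pow, Real.sq_sqrt hz.le]
      rw [hx2, hzdef]; field_simp; ring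
    rw [h2, Real.sqrt_sq (by positivity)]
  have hVPeq : 2 * VQ * (Real.cosh (Real.arsinh x) - 1) / g ^ 2 = VP := by
    rw [hcosh]; field_simp; ring
  have hmain := varianceSeq_closed_form VQ g (Real.arsinh x) hVQ hg hμpos k hk
  rw [hVPeq] at hmain
  rw [hmain]
  have hS : Real.sinh ((k : ℝ) * Real.arsinh x) ≠ 0 := by
    have : (0:ℝ) < (k:ℝ) * Real.arsinh x := by
      have : (1:ℝ) ≤ (k:ℝ) := by exact_mod_cast hk
      nlinarith
    exact (Real.sinh_pos_iff.mpr this).ne'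
  rw [hcosh, Real.sinh_arsinh, hxdef]
  rw [hxdef] at hS
  field_simp
  ring

/-- **Continuous-time limit (Eq. E.16)** of the Gaussian variance recurrence of
Lemma E.1: discretising time into `k` steps of length `δ = t/k`, with transition
variance `V_P = (q/(2χ))(1 − e^{−2χδ})` of the Ornstein–Uhlenbeck process and
mixing variance `V_Q = γ/δ`, the variance after `k` steps converges to
`√(γq)/g · coth(t g √(q/γ))` as the step size goes to zero. -/
theorem variance_recurrence_continuum_limit
    (t χ q γ g : ℝ) (ht : 0 < t) (hχ : 0 < χ) (hq : 0 < q) (hγ : 0 < γ) (hg : 0 < g) :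
    Tendsto (fun k : ℕ =>
        varianceSeq ((q / (2 * χ)) * (1 - Real.exp (-2 * χ * (t / k)))) (γ / (t / k)) g k)
      atTop
      (nhds ((Real.sqrt (γ * q) / g) *
        (Real.cosh (t * g * Real.sqrt (q / γ)) / Real.sinh (t * g * Real.sqrt (q / γ))))) := by
  -- δ → 0
  have hδ0 : Tendsto (fun k : ℕ => t / (k : ℝ)) atTop (nhds 0) :=
    tendsto_const_div_atTop_nhds_zero_nat t
  have hδpos : ∀ᶠ k : ℕ in atTop, 0 < t / (k : ℝ) := by
    filter_upwards [eventually_ge_atTop 1] with k hk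
    have : (0:ℝ) < (k:ℝ) := by exact_mod_cast hk
    positivity
  have hδ0' : Tendsto (fun k : ℕ => t / (k : ℝ)) atTop (nhdsWithin 0 {(0:ℝ)}ᶜ) := by
    rw [tendsto_nhdsWithin_iff]
    exact ⟨hδ0, by filter_upwards [hδpos] with k hk using hk.ne'⟩
  set VP : ℕ → ℝ := fun k => q / (2 * χ) * (1 - Real.exp (-2 * χ * (t / k))) with hVPdef
  set VQ : ℕ → ℝ := fun k => γ / (t / k) with hVQdef
  -- VP → 0
  have hcont : Continuous fun d : ℝ => q / (2 * χ) * (1 - Real.exp (-2 * χ * d)) := by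
    continuity
  have hVP0 : Tendsto VP atTop (nhds 0) := by
    have h := (hcont.tendsto 0).comp hδ0
    have h2 : q / (2 * χ) * (1 - Real.exp (-2 * χ * (0:ℝ))) = 0 := by
      norm_num
    rw [h2] at h
    exact h.congr (fun k => by simp [hVPdef, Function.comp])
  -- slope of exp part:  (1 - exp(-2χ d))/d → 2χ
  have hder : HasDerivAt (fun d : ℝ => 1 - Real.exp (-2 * χ * d)) (2 * χ) 0 := by
    have h1 : HasDerivAt (fun d : ℝ => (-2 * χ) * d) (-2 * χ) 0 := by
      simpa using (hasDerivAt_id (0:ℝ)).const_mul (-2 * χ)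
    have h2 := h1.exp
    have h3 := h2.const_sub 1
    simpa using h3
  have hslope := hasDerivAt_iff_tendsto_slope.mp hder
  have hslope' : Tendsto (fun d : ℝ => (1 - Real.exp (-2 * χ * d)) / d)
      (nhdsWithin 0 {(0:ℝ)}ᶜ) (nhds (2 * χ)) := by
    refine hslope.congr (fun d => ?_)
    simp [slope_def_field]
  -- VP * VQ → q γ
  have hProd : Tendsto (fun k : ℕ => VP k * VQ k) atTop (nhds (q * γ)) := by
    have h4 := (hslope'.comp hδ0').const_mul (q * γ / (2 * χ))
    have h5 : q * γ / (2 * χ) * (2 * χ) = q * γ := by field_simp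
    rw [h5] at h4
    refine h4.congr' ?_
    filter_upwards [hδpos] with k hk
    have hδne : t / (k:ℝ) ≠ 0 := hk.ne'
    simp only [hVPdef, hVQdef, Function.comp]
    field_simp
  have hVPpos : ∀ᶠ k : ℕ in atTop, 0 < VP k := by
    filter_upwards [hδpos] with k hk
    have he : Real.exp (-2 * χ * (t / k)) < 1 := by
      rw [Real.exp_lt_one_iff]
      nlinarith
    have : 0 < 1 - Real.exp (-2 * χ * (t / k)) := by linarith
    positivity
  have hVQpos : ∀ᶠ k : ℕ in atTop, 0 < VQ k := by
    filter_upwards [hδpos] with k hk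
    positivity
  -- z := VP*VQ + g²VP²/4
  set z : ℕ → ℝ := fun k => VP k * VQ k + g ^ 2 * (VP k) ^ 2 / 4 with hzdef
  have hz : Tendsto z atTop (nhds (q * γ)) := by
    have h := hProd.add ((hVP0.mul hVP0).const_mul (g ^ 2 / 4))
    have h2 : q * γ + g ^ 2 / 4 * (0 * 0) = q * γ := by ring
    rw [h2] at h
    exact h.congr (fun k => by simp only [hzdef]; ring)
  have hsqz : Tendsto (fun k => Real.sqrt (z k)) atTop (nhds (Real.sqrt (q * γ))) :=
    (Real.continuous_sqrt.tendsto _).comp hz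
  have hzpos : ∀ᶠ k : ℕ in atTop, 0 < z k := by
    filter_upwards [hVPpos, hVQpos] with k h1 h2
    positivity
  -- x := g √z / VQ
  set x : ℕ → ℝ := fun k => g * Real.sqrt (z k) / VQ k with hxdef
  have hxpos : ∀ᶠ k : ℕ in atTop, 0 < x k := by
    filter_upwards [hzpos, hVQpos] with k h1 h2
    have := Real.sqrt_pos.mpr h1
    positivity
  have hx0 : Tendsto x atTop (nhds 0) := by
    have h := (hsqz.mul hδ0).const_mul (g / γ)
    have h2 : g / γ * (Real.sqrt (q * γ) * 0) = 0 := by ring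
    rw [h2] at h
    refine h.congr' ?_
    filter_upwards [hδpos] with k hk
    simp only [hxdef, hVQdef]
    field_simp
  have hx0' : Tendsto x atTop (nhdsWithin 0 {(0:ℝ)}ᶜ) := by
    rw [tendsto_nhdsWithin_iff]
    exact ⟨hx0, by filter_upwards [hxpos] with k hk using hk.ne'⟩
  -- k x k → (g t/γ) √(qγ)
  have hkx : Tendsto (fun k : ℕ => (k : ℝ) * x k) atTop
      (nhds (g * t / γ * Real.sqrt (q * γ))) := by
    have h := hsqz.const_mul (g * t / γ)
    refine h.congr' ?_
    filter_upwards [hδpos, eventually_ge_atTop 1] with k hk hk1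
    have hkne : (k : ℝ) ≠ 0 := by
      have : (1:ℝ) ≤ (k:ℝ) := by exact_mod_cast hk1
      linarith
    simp only [hxdef, hVQdef]
    field_simp
  -- arsinh slope
  have harslope : Tendsto (fun y : ℝ => Real.arsinh y / y)
      (nhdsWithin 0 {(0:ℝ)}ᶜ) (nhds 1) := by
    have h := hasDerivAt_iff_tendsto_slope.mp (Real.hasDerivAt_arsinh 0)
    have h1 : (Real.sqrt (1 + (0:ℝ) ^ 2))⁻¹ = 1 := by norm_num
    rw [h1] at h
    refine h.congr (fun y => ?_)
    simp [slope_def_field, Real.arsinh_zero]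
  -- the limiting argument of coth
  have hτeq : g * t / γ * Real.sqrt (q * γ) = t * g * Real.sqrt (q / γ) := by
    have h1 : Real.sqrt (q / γ) = Real.sqrt (q * γ) / γ := by
      rw [show q / γ = q * γ / γ ^ 2 by field_simp,
        Real.sqrt_div (by positivity) (γ ^ 2), Real.sqrt_sq hγ.le]
    rw [h1]; ring
  -- k μ k → t g √(q/γ)
  have hT : Tendsto (fun k : ℕ => (k : ℝ) * Real.arsinh (x k)) atTop
      (nhds (t * g * Real.sqrt (q / γ))) := by
    rw [← hτeq]
    have h := (harslope.comp hx0').mul hkx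
    rw [one_mul] at h
    refine h.congr' ?_
    filter_upwards [hxpos] with k hk
    have : x k ≠ 0 := hk.ne'
    simp only [Function.comp]
    field_simp
  -- coth of the argument
  have hτpos : 0 < t * g * Real.sqrt (q / γ) := by
    have := Real.sqrt_pos.mpr (div_pos hq hγ)
    positivity
  have hsinhne : Real.sinh (t * g * Real.sqrt (q / γ)) ≠ 0 :=
    (Real.sinh_pos_iff.mpr hτpos).ne'
  have hcoth : Tendsto (fun k : ℕ =>
      Real.cosh ((k : ℝ) * Real.arsinh (x k)) / Real.sinh ((k : ℝ) * Real.arsinh (x k)))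
      atTop (nhds (Real.cosh (t * g * Real.sqrt (q / γ)) /
        Real.sinh (t * g * Real.sqrt (q / γ)))) :=
    ((Real.continuous_cosh.tendsto _).comp hT).div
      ((Real.continuous_sinh.tendsto _).comp hT) hsinhne
  -- assemble
  have hB : Tendsto (fun k => Real.sqrt (z k) / g) atTop (nhds (Real.sqrt (q * γ) / g)) :=
    hsqz.div_const g
  have hfinal := (hVP0.div_const 2).add (hB.mul hcoth)
  have hlim : (0:ℝ) / 2 + Real.sqrt (q * γ) / g *
      (Real.cosh (t * g * Real.sqrt (q / γ)) / Real.sinh (t * g * Real.sqrt (q / γ))) =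
      Real.sqrt (γ * q) / g *
      (Real.cosh (t * g * Real.sqrt (q / γ)) / Real.sinh (t * g * Real.sqrt (q / γ))) := by
    rw [mul_comm q γ]; ring
  rw [hlim] at hfinal
  refine Tendsto.congr' ?_ hfinal
  filter_upwards [hVPpos, hVQpos, eventually_ge_atTop 1] with k h1 h2 hk
  simp only [hxdef, hzdef]
  exact (varianceSeq_closed_form' (VP k) (VQ k) g h1 h2 hg k hk).symm
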